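/- arXiv:1502.06068 — 2 statements merged into one kernel-verified Lean document; each statement's English description precedes it below -/
import Mathlib

section
/- As formal power series, ∑_{n≥0} n! x^n = c(x) + c'(x) ∑_{n≥1} U_n x^n c(x)^{2n-2}, where c(x) is the Catalan generating function, c'(x) its formal derivative, and U_n the n-th ordinary ménage number. -/
open Finset PowerSeries

/-- An ordinary ménage permutation: `π i ≠ i` and `π i ≢ i + 1 (mod n)` for all `i`. -/
def IsOrdinaryMenage {n : ℕ} (π : Equiv.Perm (Fin n)) : Prop :=
  ∀ i : Fin n, π i ≠ i ∧ (π i : ℕ) ≠ ((i : ℕ) + 1) % n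

instance {n : ℕ} (π : Equiv.Perm (Fin n)) : Decidable (IsOrdinaryMenage π) := by
  unfold IsOrdinaryMenage; infer_instance

/-- The `n`-th ordinary ménage number. -/
def ordinaryMenage (n : ℕ) : ℕ :=
  (Finset.univ.filter fun π : Equiv.Perm (Fin n) => IsOrdinaryMenage π).card

/-- The generating function of the Catalan numbers `C_k = (2k)!/(k!(k+1)!)` over `ℚ`. -/
noncomputable def catGF : PowerSeries ℚ :=
  PowerSeries.mk fun k => ((2 * k).factorial : ℚ) / ((k.factorial : ℚ) * ((k + 1).factorial : ℚ))

namespace MenageAux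


open Finset PowerSeries


/-- The Touchard-type coefficient. -/
def gg (n k : ℕ) : ℕ := (n + k).choose (2 * k) + (n + k - 1).choose (2 * k)

lemma gg_eq_zero {n k : ℕ} (h : n < k) : gg n k = 0 := by
  unfold gg
  rw [Nat.choose_eq_zero_of_lt (by omega), Nat.choose_eq_zero_of_lt (by omega)]

lemma gg_self {n : ℕ} (hn : 1 ≤ n) : gg n n = 1 := by
  unfold gg
  rw [show n + n = 2*n by ring, Nat.choose_self, Nat.choose_eq_zero_of_lt (by omega)]

lemma gg_zero {n : ℕ} (hn : 1 ≤ n) : gg n 0 = 2 := by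
  unfold gg
  simp

/-- Main per-term identity for the telescoping (pure ℕ facts, stated in ℚ). -/
lemma key_identity (k i a M : ℕ) (hk : 1 ≤ k) (hM : M = 2*(k+i+a)) :
    (gg (k+i) k : ℚ) * (M.choose a : ℚ) * ((i + a : ℕ) : ℚ)
      = (a : ℚ) * ((2*k+i).choose (2*k) : ℚ) * (M.choose a : ℚ)
        + ((a+1 : ℕ) : ℚ) * ((2*k+i-1).choose (2*k) : ℚ) * (M.choose (a+1) : ℚ) := by
  have hgg : gg (k+i) k = (2*k+i).choose (2*k) + (2*k+i-1).choose (2*k) := by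
    unfold gg; congr 2 <;> omega
  rw [hgg]
  have R1 : (2*k+i-1).choose (2*k) * (2*k+i) = (2*k+i).choose (2*k) * i := by
    have h := Nat.choose_mul_succ_eq (2*k+i-1) (2*k)
    rw [show 2*k+i-1+1 = 2*k+i from by omega, show 2*k+i - 2*k = i from by omega] at h
    exact h
  have R2 : M.choose (a+1) * (a+1) = M.choose a * (2*k+2*i+a) := by
    have h := Nat.choose_succ_right_eq M a
    rw [show M - a = 2*k+2*i+a from by omega] at h
    exact h
  have R1' : ((2*k+i-1).choose (2*k) : ℚ) * (2*k+i : ℕ) = ((2*k+i).choose (2*k) : ℚ) * i := by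
    exact_mod_cast congrArg (Nat.cast (R := ℚ)) R1
  have R2' : (M.choose (a+1) : ℚ) * ((a:ℚ)+1) = (M.choose a : ℚ) * ((2*k+2*i+a : ℕ) : ℚ) := by
    push_cast
    exact_mod_cast congrArg (Nat.cast (R := ℚ)) R2
  push_cast at R1' R2' ⊢
  linear_combination (-(M.choose a : ℚ)) * R1' - ((2*k+i-1).choose (2*k) : ℚ) * R2'

/-- The inner alternating sum. -/
noncomputable def W (m k : ℕ) : ℚ :=
  ∑ n ∈ Icc 1 m, (-1)^(n-k) * (gg n k : ℚ) * ((2*m).choose (m - n) : ℚ)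

lemma W_top {m : ℕ} (hm : 1 ≤ m) : W m m = 1 := by
  unfold W
  rw [Finset.sum_eq_single m]
  · rw [gg_self hm]
    simp
  · intro n hn hne
    rw [mem_Icc] at hn
    rw [gg_eq_zero (by omega)]
    simp
  · intro h
    exact absurd (mem_Icc.mpr ⟨hm, le_refl m⟩) h

lemma W_mid {m k : ℕ} (hk : 1 ≤ k) (hkm : k < m) : W m k = 0 := by
  unfold W
  rw [← Finset.sum_subset (Finset.Icc_subset_Icc_left hk)
    (by intro n hn hn'; rw [mem_Icc] at *; rw [gg_eq_zero (by omega)]; simp)]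
  rw [show Icc k m = Ico k (m+1) by rw [Finset.Ico_add_one_right_eq_Icc], Finset.sum_Ico_eq_sum_range]
  have hcard : m + 1 - k = (m - k) + 1 := by omega
  set h : ℕ → ℚ := fun i => -((-1:ℚ)^i * ((m + 1 - (k+i) : ℕ) : ℚ) / ((m - k : ℕ) : ℚ)
      * ((2*k+i-1).choose (2*k) : ℚ) * ((2*m).choose (m + 1 - (k+i)) : ℚ)) with hh
  have step : ∀ i ∈ range (m + 1 - k),
      (-1:ℚ)^(k + i - k) * (gg (k+i) k : ℚ) * ((2*m).choose (m - (k+i)) : ℚ)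
        = h (i+1) - h i := by
    intro i hi
    rw [mem_range] at hi
    have him : k + i ≤ m := by omega
    obtain ⟨a, ha⟩ : ∃ a, m = k + i + a := ⟨m - (k+i), by omega⟩
    have d1 : k + i - k = i := by omega
    have d2 : m - (k+i) = a := by omega
    have d3 : m + 1 - (k + (i+1)) = a := by omega
    have d4 : 2*k + (i+1) - 1 = 2*k + i := by omega
    have d5 : m + 1 - (k+i) = a + 1 := by omega
    have d6 : m - k = i + a := by omega
    simp only [hh, d1, d2, d3, d4, d5, d6]
    have KI := key_identity k i a (2*m) hk (by omega)
    have hne' : ((i+a:ℕ):ℚ) ≠ 0 := Nat.cast_ne_zero.mpr (by omega)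
    rw [pow_succ]
    push_cast at KI hne' ⊢
    field_simp
    linear_combination KI
  rw [Finset.sum_congr rfl step, Finset.sum_range_sub h, hcard]
  have h0 : h 0 = 0 := by
    simp only [hh]
    rw [show 2*k+0-1 = 2*k-1 from by omega, Nat.choose_eq_zero_of_lt (by omega)]
    simp
  have hN : h ((m-k)+1) = 0 := by
    simp only [hh]
    rw [show m + 1 - (k + ((m-k)+1)) = 0 from by omega]
    simp
  rw [h0, hN, sub_zero]

open Finset





lemma two_central (M : ℕ) : (2*M+2).choose (M+1) = 2 * ((2*M+1).choose M) := by
  have p : (2*M+2).choose (M+1) = (2*M+1).choose M + (2*M+1).choose (M+1) :=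
    Nat.choose_succ_succ (2*M+1) M
  have s : (2*M+1).choose (M+1) = (2*M+1).choose M := Nat.choose_symm_half M
  omega

lemma W_zero {m : ℕ} (hm : 1 ≤ m) : W m 0 = -((2*m).choose m : ℚ) := by
  obtain ⟨M, rfl⟩ : ∃ M, m = M + 1 := ⟨m - 1, by omega⟩
  unfold W
  have congr1 : ∀ n ∈ Icc 1 (M+1),
      (-1:ℚ)^(n-0) * (gg n 0 : ℚ) * ((2*(M+1)).choose (M+1-n) : ℚ)
      = (-1:ℚ)^n * 2 * ((2*M+2).choose (M+1-n) : ℚ) := by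
    intro n hn
    rw [mem_Icc] at hn
    rw [Nat.sub_zero, gg_zero hn.1, show 2*(M+1) = 2*M+2 from by ring]
    norm_num
  rw [Finset.sum_congr rfl congr1]
  rw [show Icc 1 (M+1) = Ico 1 (M+2) from by rw [← Finset.Ico_add_one_right_eq_Icc]; rfl,
    Finset.sum_Ico_eq_sum_range, show M + 2 - 1 = M + 1 from by omega]
  -- f i := (-1)^(i+1) * 2 * C(2M+1, M-i)
  set f : ℕ → ℚ := fun i => (-1:ℚ)^(i+1) * 2 * ((2*M+1).choose (M-i) : ℚ) with hf
  have step : ∀ i ∈ range M,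
      (-1:ℚ)^(1+i) * 2 * ((2*M+2).choose (M+1-(1+i)) : ℚ) = f i - f (i+1) := by
    intro i hi
    rw [mem_range] at hi
    obtain ⟨d, hd⟩ : ∃ d, M = i + d + 1 := ⟨M - i - 1, by omega⟩
    have d1 : M + 1 - (1+i) = d + 1 := by omega
    have d2 : M - i = d + 1 := by omega
    have d3 : M - (i+1) = d := by omega
    simp only [hf, d1, d2, d3]
    have pas : (2*M+2).choose (d+1) = (2*M+1).choose d + (2*M+1).choose (d+1) :=
      Nat.choose_succ_succ (2*M+1) d
    rw [pas]
    push_cast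
    ring
  rw [Finset.sum_range_succ, Finset.sum_congr rfl step, Finset.sum_range_sub' f]
  have e1 : f 0 = -2 * ((2*M+1).choose M : ℚ) := by simp [hf]
  have e2 : f M = (-1:ℚ)^(M+1) * 2 := by simp [hf]
  have e3 : M + 1 - (1 + M) = 0 := by omega
  rw [e1, e2, e3]
  have tc := two_central M
  have tc' : ((2*M+2).choose (M+1) : ℚ) = 2 * ((2*M+1).choose M : ℚ) := by exact_mod_cast tc
  rw [show 2*(M+1) = 2*M+2 from by ring]
  rw [Nat.choose_zero_right]
  push_cast
  rw [tc']
  ring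

/-- The `V` numbers: signed Touchard sums. -/
noncomputable def V (n : ℕ) : ℚ :=
  ∑ k ∈ range (n+1), (-1)^(n-k) * (gg n k : ℚ) * (k.factorial : ℚ)


lemma claimC {m : ℕ} (hm : 1 ≤ m)
    (Wtop : W m m = 1) (Wmid : ∀ k, 1 ≤ k → k < m → W m k = 0) :
    ∑ n ∈ Icc 1 m, V n * ((2*m).choose (m - n) : ℚ)
      = (m.factorial : ℚ) - ((2*m).choose m : ℚ) := by
  have hVext : ∀ n ∈ Icc 1 m, V n * ((2*m).choose (m-n) : ℚ)
      = ∑ k ∈ range (m+1),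
          (-1:ℚ)^(n-k) * (gg n k : ℚ) * (k.factorial : ℚ) * ((2*m).choose (m-n) : ℚ) := by
    intro n hn
    rw [mem_Icc] at hn
    unfold V
    rw [Finset.sum_mul]
    apply Finset.sum_subset
    · intro x hx; rw [mem_range] at *; omega
    · intro x hx hx'
      rw [mem_range] at hx hx'
      rw [gg_eq_zero (by omega)]
      simp
  rw [Finset.sum_congr rfl hVext, Finset.sum_comm]
  have inner : ∀ k ∈ range (m+1),
      ∑ n ∈ Icc 1 m, (-1:ℚ)^(n-k) * (gg n k : ℚ) * (k.factorial : ℚ) * ((2*m).choose (m-n) : ℚ)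
      = (k.factorial : ℚ) * W m k := by
    intro k hk
    unfold W
    rw [Finset.mul_sum]
    apply Finset.sum_congr rfl
    intro n hn
    ring
  rw [Finset.sum_congr rfl inner]
  have hsub : ({0, m} : Finset ℕ) ⊆ range (m+1) := by
    intro x hx
    simp only [mem_insert, mem_singleton] at hx
    rw [mem_range]; omega
  rw [← Finset.sum_subset hsub (by
    intro x hx hx'
    simp only [mem_insert, mem_singleton] at hx'
    push_neg at hx'
    rw [mem_range] at hx
    rw [Wmid x (by omega) (by omega)]
    ring)]
  rw [Finset.sum_pair (by omega : (0:ℕ) ≠ m)]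
  rw [Wtop, W_zero hm]
  simp [Nat.factorial]
  ring

open Finset


lemma filter_nocons_singleton_empty :
    (filter (fun s => ∀ i ∈ s, i+1 ∉ s) ({∅} : Finset (Finset ℕ))) = {∅} := by
  apply Finset.filter_true_of_mem
  intro s hs
  rw [Finset.mem_singleton] at hs
  subst hs
  intro i hi
  exact absurd hi (Finset.notMem_empty i)

/-- Number of `j`-subsets of `Ico a (a+L)` with no two consecutive elements. -/
lemma path_count : ∀ L a j : ℕ,
    ((powersetCard j (Ico a (a+L))).filter fun s => ∀ i ∈ s, i+1 ∉ s).card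
      = (L + 1 - j).choose j := by
  intro L
  induction L using Nat.strong_induction_on with
  | _ L IH =>
  rcases L with _ | (_ | L)
  · -- L = 0
    intro a j
    rw [Nat.add_zero, Ico_self]
    rcases j with _ | j
    · rw [Finset.powersetCard_zero, filter_nocons_singleton_empty]
      simp
    · rw [Finset.powersetCard_eq_empty.mpr (by simp)]
      rw [Nat.choose_eq_zero_of_lt (by omega)]
      simp
  · -- L = 1
    intro a j
    rw [show a + (0+1) = a + 0 + 1 from rfl, Finset.Ico_add_one_right_eq_Icc, Nat.add_zero, Finset.Icc_self]
    rcases j with _ | (_ | j)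
    · rw [Finset.powersetCard_zero, filter_nocons_singleton_empty]
      simp
    · rw [Finset.powersetCard_one]
      rw [Finset.filter_true_of_mem ?_, Finset.card_map, Finset.card_singleton]
      · rfl
      · intro s hs
        simp only [Finset.mem_map, Finset.mem_singleton] at hs
        obtain ⟨x, hx, rfl⟩ := hs
        intro i hi
        simp only [Function.Embedding.coeFn_mk, Finset.mem_singleton] at hi ⊢
        omega
    · rw [Finset.powersetCard_eq_empty.mpr (by simp)]
      rw [Nat.choose_eq_zero_of_lt (by omega)]
      simp
  · -- L + 2
    intro a j
    rcases j with _ | J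
    · -- j = 0
      rw [Finset.powersetCard_zero, filter_nocons_singleton_empty]
      simp
    rw [show L+1+1 = L+2 from by omega]
    set t0 := a + L + 1 with ht0
    have key := Finset.card_filter_add_card_filter_not
      (s := (powersetCard (J+1) (Ico a (a+(L+2)))).filter fun s => ∀ i ∈ s, i+1 ∉ s)
      (p := fun s => t0 ∈ s)
    have hnotin : (((powersetCard (J+1) (Ico a (a+(L+2)))).filter fun s => ∀ i ∈ s, i+1 ∉ s).filter
        fun s => ¬ t0 ∈ s)
        = ((powersetCard (J+1) (Ico a (a+(L+1)))).filter fun s => ∀ i ∈ s, i+1 ∉ s) := by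
      ext s
      simp only [mem_filter, mem_powersetCard]
      constructor
      · rintro ⟨⟨⟨hsub, hcard⟩, hcond⟩, hni⟩
        refine ⟨⟨?_, hcard⟩, hcond⟩
        intro x hx
        have h1 := hsub hx
        rw [mem_Ico] at *
        have h2 : x ≠ t0 := fun h => hni (h ▸ hx)
        omega
      · rintro ⟨⟨hsub, hcard⟩, hcond⟩
        have hni : t0 ∉ s := by
          intro h
          have := hsub h
          rw [mem_Ico] at this
          omega
        refine ⟨⟨⟨?_, hcard⟩, hcond⟩, hni⟩
        intro x hx
        have := hsub hx
        rw [mem_Ico] at *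
        omega
    have hin : (((powersetCard (J+1) (Ico a (a+(L+2)))).filter fun s => ∀ i ∈ s, i+1 ∉ s).filter
        fun s => t0 ∈ s).card
        = ((powersetCard J (Ico a (a+L))).filter fun s => ∀ i ∈ s, i+1 ∉ s).card := by
      refine Finset.card_bij' (fun s _ => s.erase t0) (fun s _ => insert t0 s) ?hi ?hj ?left ?right
      case hi =>
        intro s hs
        simp only [mem_filter, mem_powersetCard] at hs ⊢
        obtain ⟨⟨⟨hsub, hcard⟩, hcond⟩, hmem⟩ := hs
        have hLnotin : a + L ∉ s := fun h => hcond (a+L) h hmem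
        refine ⟨⟨?_, ?_⟩, ?_⟩
        · intro x hx
          rw [Finset.mem_erase] at hx
          obtain ⟨hne, hxs⟩ := hx
          have := hsub hxs
          rw [mem_Ico] at *
          have hxne : x ≠ a + L := fun h => hLnotin (h ▸ hxs)
          omega
        · rw [Finset.card_erase_of_mem hmem, hcard]
          omega
        · intro i hi hcontra
          rw [Finset.mem_erase] at hi hcontra
          exact hcond i hi.2 hcontra.2
      case hj =>
        intro s hs
        simp only [mem_filter, mem_powersetCard] at hs ⊢
        obtain ⟨⟨hsub, hcard⟩, hcond⟩ := hs
        have ht0notin : t0 ∉ s := by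
          intro h
          have := hsub h
          rw [mem_Ico] at this
          omega
        refine ⟨⟨⟨?_, ?_⟩, ?_⟩, Finset.mem_insert_self _ _⟩
        · intro x hx
          rw [Finset.mem_insert] at hx
          rcases hx with rfl | hx
          · rw [mem_Ico]; omega
          · have := hsub hx
            rw [mem_Ico] at *
            omega
        · rw [Finset.card_insert_of_notMem ht0notin, hcard]
        · intro i hi hcontra
          rw [Finset.mem_insert] at hi hcontra
          rcases hi with rfl | hi
          · rcases hcontra with h | h
            · omega
            · have := hsub h; rw [mem_Ico] at this; omega
          · rcases hcontra with h | h
            · have := hsub hi; rw [mem_Ico] at this; omega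
            · exact hcond i hi h
      case left =>
        intro s hs
        simp only [mem_filter] at hs
        exact Finset.insert_erase hs.2
      case right =>
        intro s hs
        simp only [mem_filter, mem_powersetCard] at hs
        apply Finset.erase_insert
        intro h
        have := hs.1.1 h
        rw [mem_Ico] at this
        omega
    have c1 : (((powersetCard (J+1) (Ico a (a+(L+2)))).filter fun s => ∀ i ∈ s, i+1 ∉ s).filter
        fun s => ¬ t0 ∈ s).card = (L + 1 - J).choose (J+1) := by
      rw [hnotin]
      rw [IH (L+1) (by omega) a (J+1)]
      congr 1
      omega
    have c2 : (((powersetCard (J+1) (Ico a (a+(L+2)))).filter fun s => ∀ i ∈ s, i+1 ∉ s).filter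
        fun s => t0 ∈ s).card = (L + 1 - J).choose J := by
      rw [hin, IH L (by omega) a J]
    rcases Nat.lt_or_ge (L+1) J with h | h
    · have z1 : (L+2+1-(J+1)).choose (J+1) = 0 := Nat.choose_eq_zero_of_lt (by omega)
      have z2 : (L+1-J).choose (J+1) = 0 := Nat.choose_eq_zero_of_lt (by omega)
      have z3 : (L+1-J).choose J = 0 := Nat.choose_eq_zero_of_lt (by omega)
      omega
    · have pas : (L + 2 + 1 - (J+1)).choose (J+1) = (L+1-J).choose J + (L+1-J).choose (J+1) := by
        rw [show L + 2 + 1 - (J+1) = (L+1-J) + 1 from by omega]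
        exact Nat.choose_succ_succ (L+1-J) J
      omega

/-- Number of `j`-subsets of the cycle `Z_m` (`m ≥ 4`, `j ≥ 1`) with no two cyclically
adjacent elements. -/
lemma cycle_count {m j : ℕ} (hm : 4 ≤ m) (hj : 1 ≤ j) :
    ((powersetCard j (range m)).filter fun s => ∀ i ∈ s, (i+1) % m ∉ s).card
      = (m-j).choose j + (m-j-1).choose (j-1) := by
  have key := Finset.card_filter_add_card_filter_not
    (s := (powersetCard j (range m)).filter fun s => ∀ i ∈ s, (i+1) % m ∉ s)
    (p := fun s => (0:ℕ) ∈ s)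
  have hnotin : (((powersetCard j (range m)).filter fun s => ∀ i ∈ s, (i+1) % m ∉ s).filter
      fun s => ¬ (0:ℕ) ∈ s).card = (m-j).choose j := by
    have heq : (((powersetCard j (range m)).filter fun s => ∀ i ∈ s, (i+1) % m ∉ s).filter
        fun s => ¬ (0:ℕ) ∈ s)
        = ((powersetCard j (Ico 1 (1+(m-1)))).filter fun s => ∀ i ∈ s, i+1 ∉ s) := by
      ext s
      simp only [mem_filter, mem_powersetCard]
      constructor
      · rintro ⟨⟨⟨hsub, hcard⟩, hcond⟩, h0⟩
        have hsub' : ∀ x ∈ s, 1 ≤ x ∧ x < m := by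
          intro x hx
          have h1 := hsub hx
          rw [mem_range] at h1
          have : x ≠ 0 := fun h => h0 (h ▸ hx)
          omega
        refine ⟨⟨?_, hcard⟩, ?_⟩
        · intro x hx
          have := hsub' x hx
          rw [mem_Ico]
          omega
        · intro i hi hcontra
          have h1 := hsub' i hi
          have h2 := hsub' (i+1) hcontra
          have h3 : (i+1) % m = i + 1 := Nat.mod_eq_of_lt (by omega)
          exact hcond i hi (by rw [h3]; exact hcontra)
      · rintro ⟨⟨hsub, hcard⟩, hcond⟩
        have hsub' : ∀ x ∈ s, 1 ≤ x ∧ x < m := by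
          intro x hx
          have := hsub hx
          rw [mem_Ico] at this
          omega
        have h0 : (0:ℕ) ∉ s := by
          intro h
          have := hsub' 0 h
          omega
        refine ⟨⟨⟨?_, hcard⟩, ?_⟩, h0⟩
        · intro x hx
          rw [mem_range]
          exact (hsub' x hx).2
        · intro i hi hcontra
          have h1 := hsub' i hi
          rcases Nat.lt_or_ge (i+1) m with h | h
          · rw [Nat.mod_eq_of_lt h] at hcontra
            exact hcond i hi hcontra
          · have hh : i + 1 = m := by omega
            rw [hh, Nat.mod_self] at hcontra
            exact h0 hcontra
    rw [heq, path_count]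
    congr 1
    omega
  have hin : (((powersetCard j (range m)).filter fun s => ∀ i ∈ s, (i+1) % m ∉ s).filter
      fun s => (0:ℕ) ∈ s).card = (m-j-1).choose (j-1) := by
    obtain ⟨J, rfl⟩ : ∃ J, j = J + 1 := ⟨j - 1, by omega⟩
    have hbij : (((powersetCard (J+1) (range m)).filter fun s => ∀ i ∈ s, (i+1) % m ∉ s).filter
        fun s => (0:ℕ) ∈ s).card
        = ((powersetCard J (Ico 2 (2+(m-3)))).filter fun s => ∀ i ∈ s, i+1 ∉ s).card := by
      refine Finset.card_bij' (fun s _ => s.erase 0) (fun s _ => insert 0 s) ?hi ?hj ?left ?right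
      case hi =>
        intro s hs
        simp only [mem_filter, mem_powersetCard] at hs ⊢
        obtain ⟨⟨⟨hsub, hcard⟩, hcond⟩, hmem⟩ := hs
        have h1 : (1:ℕ) ∉ s := by
          have := hcond 0 hmem
          rwa [Nat.mod_eq_of_lt (by omega)] at this
        have hm1 : (m-1:ℕ) ∉ s := by
          intro h
          have := hcond (m-1) h
          rw [show m - 1 + 1 = m from by omega, Nat.mod_self] at this
          exact this hmem
        have hsub' : ∀ x ∈ s.erase 0, 2 ≤ x ∧ x < m - 1 := by
          intro x hx
          rw [Finset.mem_erase] at hx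
          obtain ⟨hne, hxs⟩ := hx
          have := hsub hxs
          rw [mem_range] at this
          have e1 : x ≠ 1 := fun h => h1 (h ▸ hxs)
          have e2 : x ≠ m - 1 := fun h => hm1 (h ▸ hxs)
          omega
        refine ⟨⟨?_, ?_⟩, ?_⟩
        · intro x hx
          have := hsub' x hx
          rw [mem_Ico]
          omega
        · rw [Finset.card_erase_of_mem hmem, hcard]
          omega
        · intro i hi hcontra
          have hi1 := hsub' i hi
          have hi2 := hsub' (i+1) hcontra
          rw [Finset.mem_erase] at hi hcontra
          have := hcond i hi.2
          rw [Nat.mod_eq_of_lt (by omega)] at this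
          exact this hcontra.2
      case hj =>
        intro s hs
        simp only [mem_filter, mem_powersetCard] at hs ⊢
        obtain ⟨⟨hsub, hcard⟩, hcond⟩ := hs
        have hsub' : ∀ x ∈ s, 2 ≤ x ∧ x < m - 1 := by
          intro x hx
          have := hsub hx
          rw [mem_Ico] at this
          omega
        have h0 : (0:ℕ) ∉ s := by
          intro h; have := hsub' 0 h; omega
        refine ⟨⟨⟨?_, ?_⟩, ?_⟩, Finset.mem_insert_self _ _⟩
        · intro x hx
          rw [Finset.mem_insert] at hx
          rw [mem_range]
          rcases hx with rfl | hx
          · omega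
          · have := hsub' x hx; omega
        · rw [Finset.card_insert_of_notMem h0, hcard]
        · intro i hi hcontra
          rw [Finset.mem_insert] at hi hcontra
          rcases hi with rfl | hi
          · rw [Nat.mod_eq_of_lt (by omega)] at hcontra
            rcases hcontra with h | h
            · omega
            · have := hsub' 1 h; omega
          · have hii := hsub' i hi
            rw [Nat.mod_eq_of_lt (by omega)] at hcontra
            rcases hcontra with h | h
            · omega
            · exact hcond i hi h
      case left =>
        intro s hs
        simp only [mem_filter] at hs
        exact Finset.insert_erase hs.2
      case right =>
        intro s hs
        simp only [mem_filter, mem_powersetCard] at hs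
        apply Finset.erase_insert
        intro h
        have := hs.1.1 h
        rw [mem_Ico] at this
        omega
    rw [hbij, path_count]
    congr 1
    omega
  omega

open Finset


/-- Number of permutations extending an injective partial function equals `(card α - S.card)!`. -/
lemma card_perm_extending {α : Type*} [DecidableEq α] [Fintype α] (S : Finset α) (c : α → α)
    (hc : Set.InjOn c ↑S) :
    (univ.filter fun π : Equiv.Perm α => ∀ i ∈ S, π i = c i).card
      = (Fintype.card α - S.card).factorial := by
  classical
  set T : Finset α := S.image c with hT
  have hTcard : T.card = S.card := Finset.card_image_of_injOn hc
  -- the equivalence between S and T induced by c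
  have hinj : Function.Injective (fun x : {x // x ∈ S} => (⟨c x.1, Finset.mem_image_of_mem c x.2⟩ : {x // x ∈ T})) := by
    intro x y h
    apply Subtype.ext
    exact hc x.2 y.2 (congrArg Subtype.val h)
  have hbij : Function.Bijective (fun x : {x // x ∈ S} => (⟨c x.1, Finset.mem_image_of_mem c x.2⟩ : {x // x ∈ T})) := by
    rw [Fintype.bijective_iff_injective_and_card]
    refine ⟨hinj, ?_⟩
    simp only [Fintype.card_coe, hTcard]
  set ep : {x // x ∈ S} ≃ {x // x ∈ T} := Equiv.ofBijective _ hbij with hep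
  have hepval : ∀ x : {x // x ∈ S}, (ep x : α) = c x.1 := fun x => rfl
  have hcompl : Fintype.card {x // ¬ x ∈ S} = Fintype.card {x // ¬ x ∈ T} := by
    rw [Fintype.card_subtype_compl, Fintype.card_subtype_compl]
    simp only [Fintype.card_coe, hTcard]
  set en : {x // ¬ x ∈ S} ≃ {x // ¬ x ∈ T} := Fintype.equivOfCardEq hcompl with hen
  set π₀ : Equiv.Perm α := Equiv.subtypeCongr ep en with hπ₀
  have hπ₀S : ∀ i ∈ S, π₀ i = c i := by
    intro i hi
    rw [hπ₀]
    unfold Equiv.subtypeCongr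
    simp only [Equiv.trans_apply, Equiv.sumCompl_symm_apply_of_pos hi,
      Equiv.sumCongr_apply, Sum.map_inl, Equiv.sumCompl_apply_inl]
    exact hepval ⟨i, hi⟩
  -- bijection with permutations fixing S pointwise
  have hbij2 : (univ.filter fun π : Equiv.Perm α => ∀ i ∈ S, π i = c i).card
      = (univ.filter fun τ : Equiv.Perm α => ∀ i ∈ S, τ i = i).card := by
    refine Finset.card_bij' (fun π _ => π₀⁻¹ * π) (fun τ _ => π₀ * τ) ?hi ?hj ?left ?right
    case hi =>
      intro π hπ
      simp only [mem_filter, mem_univ, true_and] at hπ ⊢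
      intro i hi
      rw [Equiv.Perm.mul_apply, hπ i hi, ← hπ₀S i hi]
      exact Equiv.symm_apply_apply _ _
    case hj =>
      intro τ hτ
      simp only [mem_filter, mem_univ, true_and] at hτ ⊢
      intro i hi
      rw [Equiv.Perm.mul_apply, hτ i hi, hπ₀S i hi]
    case left =>
      intro π hπ
      group
    case right =>
      intro τ hτ
      group
  rw [hbij2]
  -- count permutations fixing S pointwise
  have e1 : (univ.filter fun τ : Equiv.Perm α => ∀ i ∈ S, τ i = i).card
      = Fintype.card {τ : Equiv.Perm α // ∀ i ∈ S, τ i = i} := by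
    rw [Fintype.card_subtype]
  rw [e1]
  have e2 : Fintype.card {τ : Equiv.Perm α // ∀ i ∈ S, τ i = i}
      = Fintype.card {f : Equiv.Perm α // ∀ a, ¬ (a ∉ S) → f a = a} := by
    apply Fintype.card_congr
    apply Equiv.subtypeEquivRight
    intro τ
    constructor
    · intro h a ha
      exact h a (not_not.mp ha)
    · intro h i hi
      exact h i (not_not.mpr hi)
  rw [e2]
  have e3 : Fintype.card {f : Equiv.Perm α // ∀ a, ¬ (a ∉ S) → f a = a}
      = Fintype.card (Equiv.Perm {x // x ∉ S}) := by
    apply Fintype.card_congr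
    exact (Equiv.Perm.subtypeEquivSubtypePerm (fun x => x ∉ S)).symm
  rw [e3, Fintype.card_perm]
  congr 1
  rw [Fintype.card_subtype_compl]
  simp [Fintype.card_coe]

open Finset


variable {n : ℕ}

/-- Cyclic shift on `Fin n`. -/
def sft (i : Fin n) : Fin n := ⟨(i.val + 1) % n, Nat.mod_lt _ i.pos⟩

lemma sft_val (i : Fin n) : (sft i).val = (i.val + 1) % n := rfl

lemma sft_val' (i : Fin n) : (sft i).val = if i.val + 1 = n then 0 else i.val + 1 := by
  rw [sft_val]
  split_ifs with h
  · rw [h, Nat.mod_self]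
  · exact Nat.mod_eq_of_lt (by have := i.isLt; omega)

lemma sft_ne (hn : 2 ≤ n) (i : Fin n) : sft i ≠ i := by
  intro h
  have := congrArg Fin.val h
  rw [sft_val'] at this
  have hlt := i.isLt
  split_ifs at this <;> omega

lemma sft_inj : Function.Injective (sft (n := n)) := by
  intro a b h
  have := congrArg Fin.val h
  rw [sft_val', sft_val'] at this
  have ha := a.isLt
  have hb := b.isLt
  apply Fin.ext
  split_ifs at this <;> omega

/-- Support of a choice function. -/
def Sg (g : Fin n → Fin 3) : Finset (Fin n) := univ.filter fun i => g i ≠ 0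

/-- Partial constraint associated with a choice function. -/
def cg (g : Fin n → Fin 3) (i : Fin n) : Fin n := if g i = 1 then i else sft i

lemma fin3_cases (t : Fin 3) : t = 0 ∨ t = 1 ∨ t = 2 := by revert t; decide

/-- Validity (non-conflicting constraints) as a pattern-avoidance condition. -/
lemma valid_iff (hn : 2 ≤ n) (g : Fin n → Fin 3) :
    Set.InjOn (cg g) ↑(Sg g) ↔ ∀ i, ¬(g i = 2 ∧ g (sft i) = 1) := by
  constructor
  · intro hinj i ⟨h2, h1⟩
    have hi : i ∈ Sg g := by simp [Sg, h2]
    have hsi : sft i ∈ Sg g := by simp [Sg, h1]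
    have e1 : cg g i = sft i := by rw [cg, if_neg (by rw [h2]; decide)]
    have e2 : cg g (sft i) = sft i := by rw [cg, if_pos h1]
    have := hinj (Finset.mem_coe.mpr hi) (Finset.mem_coe.mpr hsi) (e1.trans e2.symm)
    exact sft_ne hn i this.symm
  · intro havoid a ha b hb heq
    rw [Finset.mem_coe, Sg, mem_filter] at ha hb
    rcases fin3_cases (g a) with h | h | h
    · exact absurd h ha.2
    all_goals rcases fin3_cases (g b) with h' | h' | h'
    · exact absurd h' hb.2
    · -- g a = 1, g b = 1
      rw [cg, cg, if_pos h, if_pos h'] at heq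
      exact heq
    · -- g a = 1, g b = 2 : a = sft b
      rw [cg, cg, if_pos h, if_neg (by rw [h']; decide)] at heq
      exact absurd ⟨h', heq ▸ h⟩ (havoid b)
    · exact absurd h' hb.2
    · -- g a = 2, g b = 1
      rw [cg, cg, if_neg (by rw [h]; decide), if_pos h'] at heq
      exact absurd ⟨h, heq ▸ h'⟩ (havoid a)
    · -- g a = 2, g b = 2
      rw [cg, cg, if_neg (by rw [h]; decide), if_neg (by rw [h']; decide)] at heq
      exact sft_inj heq

/-- Encoding of a choice function as a subset of the `2n`-cycle. -/
def enc (g : Fin n → Fin 3) : Finset ℕ :=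
  ((univ.filter fun i => g i = 1).image fun i => 2*i.val) ∪
  ((univ.filter fun i => g i = 2).image fun i => 2*i.val+1)

lemma mem_enc {g : Fin n → Fin 3} {x : ℕ} :
    x ∈ enc g ↔ (∃ i, g i = 1 ∧ 2*i.val = x) ∨ (∃ i, g i = 2 ∧ 2*i.val+1 = x) := by
  simp [enc, mem_union, Finset.mem_image, mem_filter]

lemma enc_even {g : Fin n → Fin 3} (i : Fin n) : 2*i.val ∈ enc g ↔ g i = 1 := by
  rw [mem_enc]
  constructor
  · rintro (⟨i', h, heq⟩ | ⟨i', h, heq⟩)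
    · have : i' = i := Fin.ext (by omega)
      exact this ▸ h
    · omega
  · intro h
    exact Or.inl ⟨i, h, rfl⟩

lemma enc_odd {g : Fin n → Fin 3} (i : Fin n) : 2*i.val+1 ∈ enc g ↔ g i = 2 := by
  rw [mem_enc]
  constructor
  · rintro (⟨i', h, heq⟩ | ⟨i', h, heq⟩)
    · omega
    · have : i' = i := Fin.ext (by omega)
      exact this ▸ h
  · intro h
    exact Or.inr ⟨i, h, rfl⟩

lemma enc_subset {g : Fin n → Fin 3} : enc g ⊆ range (2*n) := by
  intro x hx
  rw [mem_enc] at hx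
  rw [mem_range]
  rcases hx with ⟨i, _, heq⟩ | ⟨i, _, heq⟩ <;> have := i.isLt <;> omega

lemma card_enc (g : Fin n → Fin 3) : (enc g).card = (Sg g).card := by
  rw [enc, Finset.card_union_of_disjoint, Finset.card_image_of_injective,
    Finset.card_image_of_injective]
  · rw [Sg]
    rw [show (univ.filter fun i => g i ≠ 0) = (univ.filter fun i => g i = 1) ∪ (univ.filter fun i => g i = 2) from ?_]
    · rw [Finset.card_union_of_disjoint]
      rw [Finset.disjoint_left]
      intro i hi hi'
      rw [mem_filter] at hi hi'
      rw [hi.2] at hi'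
      exact absurd hi'.2 (by decide)
    · ext i
      simp only [mem_filter, mem_union, mem_univ, true_and]
      rcases fin3_cases (g i) with h | h | h <;> rw [h] <;> decide
  · intro a b h
    have h' : 2*a.val+1 = 2*b.val+1 := h
    exact Fin.ext (by omega)
  · intro a b h
    have h' : 2*a.val = 2*b.val := h
    exact Fin.ext (by omega)
  · rw [Finset.disjoint_left]
    intro x hx hx'
    simp only [Finset.mem_image, mem_filter] at hx hx'
    obtain ⟨i, _, hi⟩ := hx
    obtain ⟨i', _, hi'⟩ := hx'
    omega

lemma mod_shift {v : ℕ} (hv : v < n) : (2*v+2) % (2*n) = 2*((v+1) % n) := by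
  rcases Nat.lt_or_ge (v+1) n with h | h
  · rw [Nat.mod_eq_of_lt (by omega), Nat.mod_eq_of_lt h]
    ring
  · have hvn : v + 1 = n := by omega
    rw [hvn, Nat.mod_self, Nat.mul_zero, show 2*v+2 = 2*n from by omega, Nat.mod_self]

lemma cond_enc (hn : 2 ≤ n) (g : Fin n → Fin 3) :
    (∀ x ∈ enc g, (x+1) % (2*n) ∉ enc g) ↔ ∀ i, ¬(g i = 2 ∧ g (sft i) = 1) := by
  constructor
  · intro hcond i ⟨h2, h1⟩
    have hx : 2*i.val+1 ∈ enc g := (enc_odd i).mpr h2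
    have := hcond _ hx
    rw [show 2*i.val+1+1 = 2*i.val+2 from by omega, mod_shift i.isLt, ← sft_val] at this
    exact this ((enc_even (sft i)).mpr h1)
  · intro havoid x hx
    rw [mem_enc] at hx
    rcases hx with ⟨i, h1, heq⟩ | ⟨i, h2, heq⟩
    · subst heq
      rw [show 2*i.val+1 = 2*i.val+1 from rfl]
      have hlt : 2*i.val+1 < 2*n := by have := i.isLt; omega
      rw [Nat.mod_eq_of_lt hlt]
      intro hmem
      rw [enc_odd i] at hmem
      rw [h1] at hmem
      exact absurd hmem (by decide)
    · subst heq
      rw [show 2*i.val+1+1 = 2*i.val+2 from by omega, mod_shift i.isLt, ← sft_val]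
      intro hmem
      rw [enc_even (sft i)] at hmem
      exact havoid i ⟨h2, hmem⟩

/-- Decoding. -/
def dec (s : Finset ℕ) : Fin n → Fin 3 :=
  fun i => if 2*i.val ∈ s then 1 else if 2*i.val+1 ∈ s then 2 else 0

lemma dec_enc (g : Fin n → Fin 3) : dec (enc g) = g := by
  funext i
  rw [dec]
  rcases fin3_cases (g i) with h | h | h
  · rw [if_neg, if_neg]
    · exact h.symm
    · rw [enc_odd i, h]; decide
    · rw [enc_even i, h]; decide
  · rw [if_pos ((enc_even i).mpr h)]
    exact h.symm
  · rw [if_neg, if_pos ((enc_odd i).mpr h)]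
    · exact h.symm
    · rw [enc_even i, h]; decide

lemma enc_dec {s : Finset ℕ} (hsub : s ⊆ range (2*n))
    (hcond : ∀ x ∈ s, (x+1) % (2*n) ∉ s) : enc (dec (n := n) s) = s := by
  ext x
  constructor
  · intro hx
    rw [mem_enc] at hx
    rcases hx with ⟨i, h1, heq⟩ | ⟨i, h2, heq⟩
    · rw [dec] at h1
      split_ifs at h1 with ha hb
      · subst heq; exact ha
      · exact absurd h1 (by decide)
      · exact absurd h1 (by decide)
    · rw [dec] at h2
      split_ifs at h2 with ha hb
      · exact absurd h2 (by decide)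
      · subst heq; exact hb
      · exact absurd h2 (by decide)
  · intro hx
    have hlt : x < 2*n := mem_range.mp (hsub hx)
    rcases Nat.even_or_odd x with ⟨v, hv⟩ | ⟨v, hv⟩
    · have hvn : v < n := by omega
      have hx2 : 2 * v ∈ s := by rwa [show 2*v = x from by omega]
      have hiff : x ∈ enc (dec (n:=n) s) ↔ (dec (n:=n) s) ⟨v, hvn⟩ = 1 := by
        rw [show x = 2*(⟨v,hvn⟩ : Fin n).val from by simp; omega]
        exact enc_even _
      rw [hiff, dec, if_pos (by simpa using hx2)]
    · have hvn : v < n := by omega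
      have hx2 : 2*v+1 ∈ s := by rwa [show 2*v+1 = x from by omega]
      have hno : 2*v ∉ s := by
        intro hmem
        have := hcond _ hmem
        rw [Nat.mod_eq_of_lt (by omega)] at this
        exact this hx2
      have hiff : x ∈ enc (dec (n:=n) s) ↔ (dec (n:=n) s) ⟨v, hvn⟩ = 2 := by
        rw [show x = 2*(⟨v,hvn⟩ : Fin n).val + 1 from by simp; omega]
        exact enc_odd _
      rw [hiff, dec, if_neg (by simpa using hno), if_pos (by simpa using hx2)]


variable {n : ℕ}

lemma menage_iff (hn : 2 ≤ n) (π : Equiv.Perm (Fin n)) :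
    IsOrdinaryMenage π ↔ ∀ i, π i ≠ i ∧ π i ≠ sft i := by
  unfold IsOrdinaryMenage
  apply forall_congr'
  intro i
  have h2 : (π i : ℕ) = ((i : ℕ) + 1) % n ↔ π i = sft i := by
    rw [Fin.ext_iff, sft_val]
  simp only [ne_eq]
  rw [h2]

/-- The weight function. -/
noncomputable def wf (π : Equiv.Perm (Fin n)) (i : Fin n) (t : Fin 3) : ℚ :=
  if t = 0 then 1 else if t = 1 then -(if π i = i then 1 else 0) else -(if π i = sft i then 1 else 0)

lemma wf_zero (π : Equiv.Perm (Fin n)) (i : Fin n) : wf π i 0 = 1 := by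
  rw [wf, if_pos rfl]

lemma wf_one (π : Equiv.Perm (Fin n)) (i : Fin n) :
    wf π i 1 = -(if π i = i then 1 else 0) := by
  rw [wf, if_neg (by decide), if_pos rfl]

lemma wf_two (π : Equiv.Perm (Fin n)) (i : Fin n) :
    wf π i 2 = -(if π i = sft i then 1 else 0) := by
  rw [wf, if_neg (by decide), if_neg (by decide)]

lemma U_eq_R_sum (hn : 2 ≤ n) :
    (ordinaryMenage n : ℚ)
      = ∑ j ∈ range (n+1), (-1:ℚ)^j * ((n-j).factorial : ℚ)
          * (((univ.filter fun g : Fin n → Fin 3 =>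
              Set.InjOn (cg g) ↑(Sg g) ∧ (Sg g).card = j).card : ℕ) : ℚ) := by
  have step1 : (ordinaryMenage n : ℚ)
      = ∑ π : Equiv.Perm (Fin n), (if IsOrdinaryMenage π then (1:ℚ) else 0) := by
    rw [ordinaryMenage, Finset.card_filter]
    push_cast
    rfl
  have hfact : ∀ π : Equiv.Perm (Fin n), (if IsOrdinaryMenage π then (1:ℚ) else 0)
      = ∏ i : Fin n, ((1:ℚ) - (if π i = i then 1 else 0) - (if π i = sft i then 1 else 0)) := by
    intro π
    by_cases hπ : IsOrdinaryMenage π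
    · rw [if_pos hπ]
      symm
      apply Finset.prod_eq_one
      intro i _
      obtain ⟨h1, h2⟩ := (menage_iff hn π).mp hπ i
      rw [if_neg h1, if_neg h2]
      ring
    · rw [if_neg hπ]
      have hπ' := hπ
      rw [menage_iff hn π] at hπ'
      push_neg at hπ'
      obtain ⟨i, hi⟩ := hπ'
      symm
      apply Finset.prod_eq_zero (Finset.mem_univ i)
      by_cases hc1 : π i = i
      · rw [if_pos hc1, if_neg (by rw [hc1]; exact fun h => sft_ne hn i h.symm)]
        ring
      · rw [if_neg hc1, if_pos (hi hc1)]
        ring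
  have step2 : ∀ π : Equiv.Perm (Fin n),
      ∏ i : Fin n, ((1:ℚ) - (if π i = i then 1 else 0) - (if π i = sft i then 1 else 0))
      = ∑ g : Fin n → Fin 3, ∏ i : Fin n, wf π i (g i) := by
    intro π
    have e1 : ∀ i : Fin n, ((1:ℚ) - (if π i = i then 1 else 0) - (if π i = sft i then 1 else 0))
        = ∑ t : Fin 3, wf π i t := by
      intro i
      rw [Fin.sum_univ_three, wf_zero, wf_one, wf_two]
      ring
    rw [Finset.prod_congr rfl (fun i _ => e1 i), Finset.prod_univ_sum]
    rw [Fintype.piFinset_univ]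
  have hSg : ∀ g : Fin n → Fin 3, univ.filter (fun i => g i ≠ 0) = Sg g := fun g => rfl
  have hprod : ∀ (g : Fin n → Fin 3) (π : Equiv.Perm (Fin n)),
      ∏ i : Fin n, wf π i (g i)
      = (-1:ℚ)^(Sg g).card * (if (∀ i ∈ Sg g, π i = cg g i) then 1 else 0) := by
    intro g π
    rw [← Finset.prod_filter_mul_prod_filter_not univ (fun i => g i ≠ 0)]
    have h2 : ∏ i ∈ univ.filter (fun i => ¬ g i ≠ 0), wf π i (g i) = 1 := by
      apply Finset.prod_eq_one
      intro i hi
      rw [mem_filter, not_not] at hi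
      rw [hi.2, wf_zero]
    have h1 : ∀ i ∈ univ.filter (fun i => g i ≠ 0),
        wf π i (g i) = (-1) * (if π i = cg g i then 1 else 0) := by
      intro i hi
      rw [mem_filter] at hi
      rcases fin3_cases (g i) with h | h | h
      · exact absurd h hi.2
      · have hcg : cg g i = i := by unfold cg; rw [if_pos h]
        rw [h, wf_one, hcg]
        ring
      · have hcg : cg g i = sft i := by unfold cg; rw [if_neg (by rw [h]; decide)]
        rw [h, wf_two, hcg]
        ring
    rw [h2, mul_one, Finset.prod_congr rfl h1, Finset.prod_mul_distrib, Finset.prod_const,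
      Finset.prod_boole, hSg]
    norm_num
  have hg : ∀ g : Fin n → Fin 3,
      ∑ π : Equiv.Perm (Fin n), ∏ i : Fin n, wf π i (g i)
      = (-1:ℚ)^(Sg g).card * (if Set.InjOn (cg g) ↑(Sg g)
          then (((n - (Sg g).card).factorial : ℕ) : ℚ) else 0) := by
    intro g
    rw [Finset.sum_congr rfl (fun π _ => hprod g π), ← Finset.mul_sum]
    congr 1
    rw [Finset.sum_boole]
    by_cases hinj : Set.InjOn (cg g) ↑(Sg g)
    · rw [if_pos hinj]
      have hcpe := card_perm_extending (Sg g) (cg g) hinj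
      rw [Fintype.card_fin] at hcpe
      rw [← hcpe]
      norm_cast
      congr 1
      ext π
      simp
    · rw [if_neg hinj]
      have hempty : (univ.filter fun π : Equiv.Perm (Fin n) => ∀ i ∈ Sg g, π i = cg g i) = ∅ := by
        apply Finset.eq_empty_of_forall_notMem
        intro π hπ
        rw [mem_filter] at hπ
        rw [Set.InjOn] at hinj
        push_neg at hinj
        obtain ⟨a, ha, b, hb, heq, hne⟩ := hinj
        apply hne
        apply π.injective
        rw [hπ.2 a (Finset.mem_coe.mp ha), hπ.2 b (Finset.mem_coe.mp hb), heq]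
      rw [hempty]
      simp
  rw [step1, Finset.sum_congr rfl (fun π _ => hfact π),
    Finset.sum_congr rfl (fun π _ => step2 π), Finset.sum_comm,
    Finset.sum_congr rfl (fun g _ => hg g)]
  -- restrict to valid g and fiber by support size
  have hsplit : ∀ g : Fin n → Fin 3,
      (-1:ℚ)^(Sg g).card * (if Set.InjOn (cg g) ↑(Sg g)
          then (((n - (Sg g).card).factorial : ℕ) : ℚ) else 0)
      = (if Set.InjOn (cg g) ↑(Sg g)
          then (-1:ℚ)^(Sg g).card * (((n - (Sg g).card).factorial : ℕ) : ℚ) else 0) := by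
    intro g
    split_ifs <;> ring
  rw [Finset.sum_congr rfl (fun g _ => hsplit g), ← Finset.sum_filter]
  have hmaps : ∀ g ∈ univ.filter (fun g : Fin n → Fin 3 => Set.InjOn (cg g) ↑(Sg g)),
      (Sg g).card ∈ range (n+1) := by
    intro g _
    rw [mem_range]
    have : (Sg g).card ≤ (univ : Finset (Fin n)).card := Finset.card_filter_le _ _
    rw [Finset.card_univ, Fintype.card_fin] at this
    omega
  rw [← Finset.sum_fiberwise_of_maps_to hmaps]
  apply Finset.sum_congr rfl
  intro j hj
  have hinner : ∀ g ∈ (univ.filter fun g : Fin n → Fin 3 =>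
      Set.InjOn (cg g) ↑(Sg g)).filter (fun g => (Sg g).card = j),
      (-1:ℚ)^(Sg g).card * (((n - (Sg g).card).factorial : ℕ) : ℚ)
        = (-1:ℚ)^j * (((n - j).factorial : ℕ) : ℚ) := by
    intro g hg
    rw [mem_filter] at hg
    rw [hg.2]
  rw [Finset.sum_congr rfl hinner, Finset.sum_const, nsmul_eq_mul, Finset.filter_filter]
  push_cast
  ring

lemma R_zero_count :
    ((univ.filter fun g : Fin n → Fin 3 =>
      Set.InjOn (cg g) ↑(Sg g) ∧ (Sg g).card = 0).card) = 1 := by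
  rw [Finset.card_eq_one]
  refine ⟨fun _ => 0, ?_⟩
  ext g
  simp only [mem_filter, mem_univ, true_and, Finset.mem_singleton]
  constructor
  · rintro ⟨_, hcard⟩
    funext i
    rw [Finset.card_eq_zero] at hcard
    by_contra hne
    have : i ∈ Sg g := by rw [Sg, mem_filter]; exact ⟨mem_univ i, hne⟩
    rw [hcard] at this
    exact absurd this (Finset.notMem_empty i)
  · rintro rfl
    have hS : Sg (fun _ => (0: Fin 3)) = (∅ : Finset (Fin n)) := by
      rw [Sg]
      apply Finset.filter_false_of_mem
      intro i _
      simp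
    rw [hS]
    constructor
    · simp
    · simp

lemma R_pos_count (hn : 2 ≤ n) (j : ℕ) (hj : 1 ≤ j) :
    ((univ.filter fun g : Fin n → Fin 3 =>
      Set.InjOn (cg g) ↑(Sg g) ∧ (Sg g).card = j).card)
      = (2*n-j).choose j + (2*n-j-1).choose (j-1) := by
  rw [← cycle_count (by omega : 4 ≤ 2*n) hj]
  refine Finset.card_bij' (fun g _ => enc g) (fun s _ => dec s) ?hi ?hj ?li ?ri
  case hi =>
    intro g hg
    rw [mem_filter] at hg
    obtain ⟨_, hvalid, hcard⟩ := hg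
    rw [mem_filter, mem_powersetCard]
    refine ⟨⟨enc_subset, by rw [card_enc, hcard]⟩, ?_⟩
    exact (cond_enc hn g).mpr ((valid_iff hn g).mp hvalid)
  case hj =>
    intro s hs
    rw [mem_filter, mem_powersetCard] at hs
    obtain ⟨⟨hsub, hcard⟩, hcond⟩ := hs
    rw [mem_filter]
    have hed := enc_dec (n := n) hsub hcond
    refine ⟨mem_univ _, ?_, ?_⟩
    · apply (valid_iff hn _).mpr
      apply (cond_enc hn _).mp
      rw [hed]
      exact hcond
    · rw [← card_enc, hed, hcard]
  case li =>
    intro g _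
    exact dec_enc g
  case ri =>
    intro s hs
    rw [mem_filter, mem_powersetCard] at hs
    exact enc_dec hs.1.1 hs.2

/-- Touchard-type formula for the ordinary ménage numbers. -/
lemma touchard (hn : 2 ≤ n) : (ordinaryMenage n : ℚ) = V n := by
  rw [U_eq_R_sum hn]
  have hterm : ∀ j ∈ range (n+1),
      (-1:ℚ)^j * ((n-j).factorial : ℚ)
          * (((univ.filter fun g : Fin n → Fin 3 =>
              Set.InjOn (cg g) ↑(Sg g) ∧ (Sg g).card = j).card : ℕ) : ℚ)
      = (-1:ℚ)^j * (gg n (n-j) : ℚ) * ((n-j).factorial : ℚ) := by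
    intro j hj
    rw [mem_range] at hj
    rcases Nat.eq_zero_or_pos j with rfl | hjpos
    · rw [R_zero_count]
      simp only [Nat.sub_zero]
      rw [gg_self (by omega : 1 ≤ n)]
      norm_num
    · rw [R_pos_count hn j hjpos]
      have e1 : gg n (n-j) = (2*n-j).choose (2*n-2*j) + (2*n-j-1).choose (2*n-2*j) := by
        unfold gg
        congr 2 <;> omega
      have s1 : (2*n-j).choose (2*n-2*j) = (2*n-j).choose j := by
        rw [show 2*n-2*j = (2*n-j) - j from by omega]
        exact Nat.choose_symm (by omega)
      have s2 : (2*n-j-1).choose (2*n-2*j) = (2*n-j-1).choose (j-1) := by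
        rw [show 2*n-2*j = (2*n-j-1) - (j-1) from by omega]
        exact Nat.choose_symm (by omega)
      rw [e1, s1, s2]
      push_cast
      ring
  rw [Finset.sum_congr rfl hterm]
  unfold V
  rw [← Finset.sum_range_reflect]
  apply Finset.sum_congr rfl
  intro j hj
  rw [mem_range] at hj
  rw [show n + 1 - 1 - j = n - j from by omega, show n - (n - j) = j from by omega]
open Finset PowerSeries



lemma catalan_mul_succ (k : ℕ) : catalan k * (k+1) = (2*k).choose k := by
  rw [catalan_eq_centralBinom_div, Nat.div_mul_cancel (Nat.succ_dvd_centralBinom k),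
    Nat.centralBinom]

lemma coeff_catGF (k : ℕ) : PowerSeries.coeff k catGF = (catalan k : ℚ) := by
  rw [catGF, coeff_mk]
  have h : (catalan k : ℚ) * ((k:ℚ)+1) = ((2*k).choose k : ℚ) := by
    exact_mod_cast congrArg (Nat.cast (R := ℚ)) (catalan_mul_succ k)
  have hc : ((2*k).choose k : ℚ) = ((2*k).factorial : ℚ) / ((k.factorial : ℚ) * (k.factorial : ℚ)) := by
    rw [Nat.cast_choose ℚ (by omega : k ≤ 2*k), show 2*k - k = k from by omega]
  have hk1 : ((k:ℚ)+1) ≠ 0 := by positivity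
  have hf : (k.factorial : ℚ) ≠ 0 := Nat.cast_ne_zero.mpr k.factorial_ne_zero
  have hfs : ((k+1).factorial : ℚ) = ((k:ℚ)+1) * (k.factorial : ℚ) := by
    rw [Nat.factorial_succ]; push_cast; ring
  rw [show ((catalan k : ℚ)) = ((2*k).choose k : ℚ) / ((k:ℚ)+1) from by
    rw [eq_div_iff hk1]; exact h]
  rw [hc, hfs]
  field_simp
  try ring
  try simp

lemma catGF_eq : catGF = 1 + X * catGF^2 := by
  ext k
  cases k with
  | zero =>
    rw [coeff_catGF, map_add, show (X : PowerSeries ℚ) * catGF^2 = X^1 * catGF^2 from by ring,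
      coeff_X_pow_mul']
    simp [catalan_zero]
  | succ k =>
    rw [coeff_catGF, map_add, show (X : PowerSeries ℚ) * catGF^2 = X^1 * catGF^2 from by ring,
      coeff_X_pow_mul']
    rw [if_pos (by omega : 1 ≤ k + 1), show k + 1 - 1 = k from by omega]
    rw [coeff_one, if_neg (by omega : ¬(k+1 = 0)), pow_two, PowerSeries.coeff_mul]
    rw [catalan_succ']
    push_cast
    rw [zero_add]
    apply Finset.sum_congr rfl
    intro p hp
    rw [coeff_catGF, coeff_catGF]

/-- The central binomial series. -/
noncomputable def bb : PowerSeries ℚ := PowerSeries.mk fun l => (((2*l).choose l : ℕ) : ℚ)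

lemma catGF_pow_rec (j : ℕ) : catGF^(j+1) = catGF^j + X * catGF^(j+2) := by
  have h : catGF^(j+1) = catGF^j * (1 + X * catGF^2) := by
    rw [← catGF_eq, pow_succ]
  rw [h]; ring

lemma coeff_bb_mul_pow : ∀ l j : ℕ, PowerSeries.coeff l (bb * catGF^j) = (((2*l+j).choose l : ℕ) : ℚ) := by
  intro l
  induction l with
  | zero =>
    intro j
    rw [coeff_zero_eq_constantCoeff, map_mul, map_pow]
    have h1 : constantCoeff bb = 1 := by
      rw [bb, ← coeff_zero_eq_constantCoeff, coeff_mk]; norm_num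
    have h2 : constantCoeff catGF = 1 := by
      rw [← coeff_zero_eq_constantCoeff, coeff_catGF, catalan_zero]; norm_num
    rw [h1, h2, one_pow, mul_one, Nat.choose_zero_right]; norm_num
  | succ l ih =>
    intro j
    induction j with
    | zero =>
      rw [pow_zero, mul_one, bb, coeff_mk]
      norm_num
    | succ j ihj =>
      rw [catGF_pow_rec j, mul_add, map_add, ihj]
      rw [show bb * (X * catGF^(j+2)) = X^1 * (bb * catGF^(j+2)) from by ring, coeff_X_pow_mul',
        if_pos (by omega : 1 ≤ l+1), show l + 1 - 1 = l from by omega, ih (j+2)]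
      have pas : (2*(l+1)+(j+1)).choose (l+1) = (2*l+j+2).choose l + (2*l+j+2).choose (l+1) := by
        rw [show 2*(l+1)+(j+1) = (2*l+j+2)+1 from by omega]
        exact Nat.choose_succ_succ (2*l+j+2) l
      have e1 : 2*(l+1)+j = 2*l+j+2 := by omega
      have e2 : 2*l+(j+2) = 2*l+j+2 := by omega
      rw [e1, e2]
      rw [pas]
      push_cast
      ring

lemma deriv_catGF : catGF.derivativeFun = bb * catGF^2 := by
  ext l
  rw [show catGF.derivativeFun = d⁄dX ℚ catGF from rfl, PowerSeries.coeff_derivative, coeff_catGF, coeff_bb_mul_pow l 2]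
  have h1 := catalan_mul_succ (l+1)
  have h2 := Nat.choose_succ_right_eq (2*(l+1)) l
  rw [show 2*(l+1) - l = l+1+1 from by omega] at h2
  have key' : catalan (l+1) * (l+1) = (2*l+2).choose l := by
    have key : catalan (l+1) * (l+1) * (l+1+1) = (2*l+2).choose l * (l+1+1) := by
      calc catalan (l+1) * (l+1) * (l+1+1) = catalan (l+1) * (l+1+1) * (l+1) := by ring
      _ = (2*(l+1)).choose (l+1) * (l+1) := by rw [h1]
      _ = (2*(l+1)).choose l * (l+1+1) := h2
      _ = (2*l+2).choose l * (l+1+1) := by rw [show 2*(l+1) = 2*l+2 from by ring]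
    exact Nat.eq_of_mul_eq_mul_right (by omega) key
  calc (catalan (l+1) : ℚ) * ((l:ℚ)+1) = ((catalan (l+1) * (l+1) : ℕ) : ℚ) := by push_cast; ring
  _ = (((2*l+2).choose l : ℕ) : ℚ) := by exact_mod_cast congrArg (Nat.cast (R := ℚ)) key'

/-- `c' * c^(2n-2)` has coefficients `C(2m, m-n)` (for `1 ≤ n ≤ m`). -/
lemma coeff_deriv_mul_pow {m n : ℕ} (h1 : 1 ≤ n) (h2 : n ≤ m) :
    PowerSeries.coeff (m - n) (catGF.derivativeFun * catGF^(2*n-2))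
      = (((2*m).choose (m-n) : ℕ) : ℚ) := by
  rw [deriv_catGF, mul_assoc, ← pow_add, show 2 + (2*n-2) = 2*n from by omega]
  rw [coeff_bb_mul_pow]
  congr 2
  omega


lemma V_one : V 1 = -1 := by
  unfold V
  rw [Finset.sum_range_succ, Finset.sum_range_one]
  have h0 : gg 1 0 = 2 := by decide
  have h1 : gg 1 1 = 1 := by decide
  rw [h0, h1]
  norm_num [Nat.factorial]

lemma U_one : ordinaryMenage 1 = 0 := by decide

lemma catalan_choose {m : ℕ} (hm : 1 ≤ m) :
    (catalan m : ℚ) = (((2*m).choose m : ℕ) : ℚ) - (((2*m).choose (m-1) : ℕ) : ℚ) := by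
  have h1 : catalan m * (m+1) = (2*m).choose m := catalan_mul_succ m
  have h2 := Nat.choose_succ_right_eq (2*m) (m-1)
  rw [show m - 1 + 1 = m from by omega, show 2*m - (m-1) = m+1 from by omega] at h2
  have h1' : ((catalan m : ℕ) : ℚ) * ((m:ℚ)+1) = (((2*m).choose m : ℕ) : ℚ) := by
    exact_mod_cast congrArg (Nat.cast (R := ℚ)) h1
  have h2' : (((2*m).choose m : ℕ) : ℚ) * (m:ℚ) = (((2*m).choose (m-1) : ℕ) : ℚ) * ((m:ℚ)+1) := by
    exact_mod_cast congrArg (Nat.cast (R := ℚ)) h2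
  have hm1 : ((m:ℚ)+1) ≠ 0 := by positivity
  apply mul_right_cancel₀ hm1
  calc (catalan m : ℚ) * ((m:ℚ)+1) = (((2*m).choose m : ℕ) : ℚ) := h1'
  _ = ((((2*m).choose m : ℕ) : ℚ) - (((2*m).choose (m-1) : ℕ) : ℚ)) * ((m:ℚ)+1) := by
      linear_combination -h2'

lemma main_numeric (m : ℕ) :
    (m.factorial : ℚ) = (catalan m : ℚ)
      + ∑ n ∈ Icc 1 m, (ordinaryMenage n : ℚ) * (((2*m).choose (m-n) : ℕ) : ℚ) := by
  rcases Nat.eq_zero_or_pos m with rfl | hm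
  · simp
  have hUV : ∀ n ∈ Icc 1 m,
      (ordinaryMenage n : ℚ) * (((2*m).choose (m-n) : ℕ) : ℚ)
        = V n * (((2*m).choose (m-n) : ℕ) : ℚ)
          + (if n = 1 then (((2*m).choose (m-1) : ℕ) : ℚ) else 0) := by
    intro n hn
    rw [mem_Icc] at hn
    rcases eq_or_lt_of_le hn.1 with heq | hlt
    · rw [if_pos heq.symm, ← heq, U_one, V_one]
      norm_num
    · rw [if_neg (by omega), ← touchard (by omega : 2 ≤ n)]
      ring
  rw [Finset.sum_congr rfl hUV, Finset.sum_add_distrib, Finset.sum_ite_eq' (Icc 1 m) 1]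
  rw [if_pos (mem_Icc.mpr ⟨le_refl 1, hm⟩)]
  rw [claimC hm (W_top hm) (fun k h1 h2 => W_mid h1 h2)]
  rw [catalan_choose hm]
  ring

lemma coeff_mul_congr (D g g' : PowerSeries ℚ) (m : ℕ)
    (h : ∀ e, e ≤ m → PowerSeries.coeff e g = PowerSeries.coeff e g') :
    PowerSeries.coeff m (D * g) = PowerSeries.coeff m (D * g') := by
  rw [PowerSeries.coeff_mul, PowerSeries.coeff_mul]
  apply Finset.sum_congr rfl
  intro p hp
  rw [Finset.HasAntidiagonal.mem_antidiagonal] at hp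
  rw [h p.2 (by omega)]

end MenageAux

open MenageAux in
/-- `∑_{n≥0} n! x^n = c(x) + c'(x) ∑_{n≥1} U_n x^n c(x)^{2n-2}`.  The infinite sum is
formally summable (the `n`-th summand is divisible by `x^n`); it is the power series whose
`x^m`-coefficient is `∑_{n=1}^{m} U_n · [x^{m-n}] c(x)^{2n-2}`. -/
theorem ordinary_menage_gf :
    (PowerSeries.mk fun n => (n.factorial : ℚ)) =
      catGF + catGF.derivativeFun *
        PowerSeries.mk (fun m =>
          ∑ n ∈ Finset.Icc 1 m,
            (ordinaryMenage n : ℚ) * PowerSeries.coeff (R := ℚ) (m - n) (catGF ^ (2 * n - 2))) := by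
  ext m
  rw [coeff_mk, map_add, coeff_catGF]
  set P : PowerSeries ℚ :=
    ∑ n ∈ Icc 1 m, (ordinaryMenage n : ℚ) • (X^n * catGF^(2*n-2)) with hP
  have hPe : ∀ e, e ≤ m →
      PowerSeries.coeff e (PowerSeries.mk (fun m =>
        ∑ n ∈ Finset.Icc 1 m,
          (ordinaryMenage n : ℚ) * PowerSeries.coeff (m - n) (catGF ^ (2 * n - 2))))
      = PowerSeries.coeff e P := by
    intro e he
    rw [coeff_mk, hP, map_sum]
    have congr1 : ∀ n ∈ Icc 1 m,
        PowerSeries.coeff e ((ordinaryMenage n : ℚ) • (X^n * catGF^(2*n-2)))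
        = (if n ≤ e then (ordinaryMenage n : ℚ) * PowerSeries.coeff (e - n) (catGF^(2*n-2)) else 0) := by
      intro n hn
      rw [map_smul, smul_eq_mul, coeff_X_pow_mul']
      split_ifs <;> simp
    rw [Finset.sum_congr rfl congr1, Finset.sum_ite, Finset.sum_const_zero, add_zero]
    apply Finset.sum_congr
    · ext x
      simp only [mem_filter, mem_Icc]
      omega
    · intro x hx
      rfl
  rw [coeff_mul_congr _ _ _ _ hPe, hP, Finset.mul_sum, map_sum]
  have congr2 : ∀ n ∈ Icc 1 m,
      PowerSeries.coeff m (catGF.derivativeFun * ((ordinaryMenage n : ℚ) • (X^n * catGF^(2*n-2))))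
      = (ordinaryMenage n : ℚ) * (((2*m).choose (m-n) : ℕ) : ℚ) := by
    intro n hn
    rw [mem_Icc] at hn
    rw [mul_smul_comm, map_smul, smul_eq_mul,
      show catGF.derivativeFun * (X^n * catGF^(2*n-2)) = X^n * (catGF.derivativeFun * catGF^(2*n-2)) from by ring,
      coeff_X_pow_mul', if_pos hn.2, coeff_deriv_mul_pow hn.1 hn.2]
  rw [Finset.sum_congr rfl congr2]
  exact main_numeric m
end

section
/- For all n ≥ 0, n! = ∑_{i=0}^{n} w_i^{n-i} · V_i, where V_i is the i-th straight ménage number and w_m^k is the coefficient of x^k in c(x)^{2m+1} (c the Catalan generating function); equivalently, n! = ∑_{i=0}^{n} V_i · [x^{n-i}] c(x)^{2i+1}. -/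
open Finset PowerSeries

/-- Touchard's formula for the `i`-th straight ménage number `V_i`. -/
def Vm (i : ℕ) : ℚ :=
  ∑ k ∈ Finset.range (i + 1),
    (-1 : ℚ) ^ k * (Nat.choose (2 * i - k) k : ℚ) * ((i - k).factorial : ℚ)

lemma coeff_catGF (k : ℕ) : PowerSeries.coeff (R := ℚ) k catGF = (catalan k : ℚ) := by
  rw [catGF, coeff_mk]
  have h1 : (2*k).choose k * k.factorial * (2*k-k).factorial = (2*k).factorial :=
    Nat.choose_mul_factorial_mul_factorial (by omega)
  have hkk : 2*k-k = k := by omega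
  rw [hkk] at h1
  have h2 : (k + 1) * catalan k = Nat.centralBinom k := succ_mul_catalan_eq_centralBinom k
  rw [Nat.centralBinom] at h2
  have hk : (k.factorial : ℚ) ≠ 0 := Nat.cast_ne_zero.2 k.factorial_ne_zero
  have hk1 : ((k:ℚ) + 1) ≠ 0 := by positivity
  rw [← h1, ← h2, Nat.factorial_succ]
  push_cast
  field_simp

lemma catGF_eq : catGF = 1 + PowerSeries.X * catGF ^ 2 := by
  ext n
  cases n with
  | zero => simp [coeff_catGF]
  | succ n =>
    rw [map_add, coeff_succ_X_mul, coeff_catGF]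
    have : (PowerSeries.coeff (R := ℚ) n) (catGF ^ 2) = ∑ ij ∈ Finset.HasAntidiagonal.antidiagonal n,
        (catalan ij.1 : ℚ) * (catalan ij.2 : ℚ) := by
      rw [sq, PowerSeries.coeff_mul]
      exact Finset.sum_congr rfl fun ij _ => by rw [coeff_catGF, coeff_catGF]
    rw [this, catalan_succ']
    push_cast
    simp

noncomputable def Aser (j : ℕ) : PowerSeries ℚ :=
  PowerSeries.mk fun n => (-1 : ℚ) ^ n * ((j + n).choose n : ℚ)

lemma coeff_one_add_X_pow (J l : ℕ) :
    PowerSeries.coeff (R := ℚ) l ((1 + PowerSeries.X : PowerSeries ℚ) ^ J) = (J.choose l : ℚ) := by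
  rw [add_comm, add_pow]
  rw [map_sum]
  have : ∀ k ∈ Finset.range (J+1), PowerSeries.coeff (R := ℚ) l
      ((PowerSeries.X:PowerSeries ℚ)^k * 1^(J-k) * (J.choose k : PowerSeries ℚ)) =
      if k = l then (J.choose k : ℚ) else 0 := by
    intro k _
    rw [one_pow, mul_one, ← map_natCast (PowerSeries.C (R := ℚ)) (J.choose k), mul_comm,
      PowerSeries.coeff_C_mul, PowerSeries.coeff_X_pow]
    by_cases h : k = l
    · subst h; simp
    · rw [if_neg (fun hh => h hh.symm), mul_zero, if_neg h]
  rw [Finset.sum_congr rfl this, Finset.sum_ite_eq' (Finset.range (J+1)) l]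
  split_ifs with h
  · rfl
  · simp at h
    rw [Nat.choose_eq_zero_of_lt (by omega), Nat.cast_zero]

lemma Aser_mul (j : ℕ) : Aser j * (1 + PowerSeries.X) ^ (j + 1) = 1 := by
  induction j with
  | zero =>
    ext n
    cases n with
    | zero => simp [Aser]
    | succ n =>
      rw [pow_one, mul_add, mul_one, map_add, PowerSeries.coeff_succ_mul_X]
      simp [Aser, pow_succ]
  | succ j ih =>
    have key : Aser (j + 1) * (1 + PowerSeries.X) = Aser j := by
      ext n
      rw [mul_add, mul_one, map_add]
      cases n with
      | zero => simp [Aser]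
      | succ n =>
        rw [PowerSeries.coeff_succ_mul_X]
        simp only [Aser, coeff_mk]
        have pas : (j + 1 + (n+1)).choose (n+1) = (j + n + 1).choose n + (j+n+1).choose (n+1) := by
          have h : j + 1 + (n+1) = (j + n + 1) + 1 := by omega
          rw [h, Nat.choose_succ_succ']
        rw [pas]
        push_cast
        ring_nf
    calc Aser (j+1) * (1 + PowerSeries.X) ^ (j + 2)
        = (Aser (j+1) * (1 + PowerSeries.X)) * (1 + PowerSeries.X) ^ (j+1) := by ring
      _ = 1 := by rw [key, ih]

lemma orth (j r : ℕ) :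
    ∑ k ∈ Finset.range (r+1),
      (-1:ℚ)^k * ((j+k).choose k : ℚ) * (((j+1).choose (r-k) : ℚ)) =
      if r = 0 then 1 else 0 := by
  have h := congrArg (PowerSeries.coeff (R := ℚ) r) (Aser_mul j)
  rw [PowerSeries.coeff_mul, Finset.Nat.sum_antidiagonal_eq_sum_range_succ_mk] at h
  simp only [Aser, coeff_mk, coeff_one_add_X_pow] at h
  rw [h, PowerSeries.coeff_one]

lemma tri (f : ℕ → ℕ → ℚ) (n : ℕ) :
    ∑ k ∈ Finset.range (n+1), ∑ l ∈ Finset.range (n+1-k), f k l =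
      ∑ s ∈ Finset.range (n+1), ∑ k ∈ Finset.range (s+1), f k (s-k) := by
  induction n with
  | zero => simp
  | succ n ih =>
    have h1 : ∀ k ∈ Finset.range (n+2), ∑ l ∈ Finset.range (n+2-k), f k l =
        ∑ l ∈ Finset.range (n+1-k), f k l + f k (n+1-k) := by
      intro k hk
      rw [Finset.mem_range] at hk
      rw [show n+2-k = (n+1-k)+1 by omega, Finset.sum_range_succ]
    rw [Finset.sum_congr rfl h1, Finset.sum_add_distrib,
      Finset.sum_range_succ (fun k => ∑ l ∈ Finset.range (n+1-k), f k l),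
      show n+1-(n+1) = 0 by omega]
    simp only [Finset.range_zero, Finset.sum_empty, add_zero]
    rw [ih, Finset.sum_range_succ
      (fun s => ∑ k ∈ Finset.range (s+1), f k (s-k))]
    conv_rhs => rw [Finset.sum_range_succ, Finset.sum_range_succ]

lemma keyE (m N : ℕ) :
    ∑ k ∈ Finset.range (N+1), (-1:ℚ)^k * ((2*m+k).choose k : ℚ) *
      PowerSeries.coeff (R := ℚ) (N-k) (catGF ^ (2*m+2*k+1)) = if N = 0 then 1 else 0 := by
  set u : PowerSeries ℚ := PowerSeries.X * catGF ^ 2 with hu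
  have hcat : catGF = u + 1 := by rw [catGF_eq]; ring
  set B : ℕ → ℚ := fun s => PowerSeries.coeff (R := ℚ) N (u ^ s) with hB
  have hBzero : ∀ s, N < s → B s = 0 := by
    intro s hs
    simp only [hB, hu, mul_pow, PowerSeries.coeff_X_pow_mul']
    rw [if_neg (by omega)]
  -- expand the coefficient
  have hexp : ∀ k, k ≤ N → PowerSeries.coeff (R := ℚ) (N-k) (catGF ^ (2*m+2*k+1)) =
      ∑ l ∈ Finset.range (2*m+2), (((2*m+1).choose l : ℚ)) * B (k+l) := by
    intro k hk
    have h1 : (PowerSeries.X:PowerSeries ℚ)^k * catGF ^ (2*m+2*k+1) = u^k * catGF^(2*m+1) := by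
      rw [hu, mul_pow, ← pow_mul, show 2*m+2*k+1 = k*2 + (2*m+1) by omega, pow_add]
      ring
    have h2 : PowerSeries.coeff (R := ℚ) (N-k) (catGF ^ (2*m+2*k+1)) =
        PowerSeries.coeff (R := ℚ) N ((PowerSeries.X:PowerSeries ℚ)^k * catGF ^ (2*m+2*k+1)) := by
      rw [PowerSeries.coeff_X_pow_mul', if_pos hk]
    rw [h2, h1]
    have h3 : u^k * catGF^(2*m+1) =
        ∑ l ∈ Finset.range (2*m+2), ((2*m+1).choose l : PowerSeries ℚ) * u^(k+l) := by
      conv_lhs => rw [hcat]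
      rw [add_pow, Finset.mul_sum]
      refine Finset.sum_congr rfl fun l _ => ?_
      rw [one_pow, mul_one, pow_add]
      ring
    rw [h3, map_sum]
    refine Finset.sum_congr rfl fun l _ => ?_
    rw [← map_natCast (PowerSeries.C (R := ℚ)) ((2*m+1).choose l), PowerSeries.coeff_C_mul]
  rw [Finset.sum_congr rfl (fun k hk => by
    rw [hexp k (by simpa using Nat.lt_succ_iff.mp (Finset.mem_range.mp hk))])]
  -- reduce inner range from (2m+2) to (N+1-k)
  have hrange : ∀ k, k ≤ N →
      ∑ l ∈ Finset.range (2*m+2), (((2*m+1).choose l : ℚ)) * B (k+l) =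
      ∑ l ∈ Finset.range (N+1-k), (((2*m+1).choose l : ℚ)) * B (k+l) := by
    intro k hk
    have e1 : ∑ l ∈ Finset.range (2*m+2), (((2*m+1).choose l : ℚ)) * B (k+l) =
        ∑ l ∈ Finset.range (2*m+2+N), (((2*m+1).choose l : ℚ)) * B (k+l) := by
      refine Finset.sum_subset (Finset.range_subset_range.2 (by omega)) fun l _ hl => ?_
      rw [Finset.mem_range, not_lt] at hl
      rw [Nat.choose_eq_zero_of_lt (by omega), Nat.cast_zero, zero_mul]
    have e2 : ∑ l ∈ Finset.range (N+1-k), (((2*m+1).choose l : ℚ)) * B (k+l) =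
        ∑ l ∈ Finset.range (2*m+2+N), (((2*m+1).choose l : ℚ)) * B (k+l) := by
      refine Finset.sum_subset (Finset.range_subset_range.2 (by omega)) fun l _ hl => ?_
      rw [Finset.mem_range, not_lt] at hl
      rw [hBzero (k+l) (by omega), mul_zero]
    rw [e1, ← e2]
  rw [Finset.sum_congr rfl (fun k hk => by
    rw [hrange k (Nat.lt_succ_iff.mp (Finset.mem_range.mp hk)), Finset.mul_sum])]
  rw [tri (fun k l => (-1:ℚ)^k * ((2*m+k).choose k : ℚ) * ((((2*m+1).choose l : ℚ)) * B (k+l))) N]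
  have hinner : ∀ s ∈ Finset.range (N+1),
      ∑ k ∈ Finset.range (s+1), (-1:ℚ)^k * ((2*m+k).choose k : ℚ) *
        ((((2*m+1).choose (s-k) : ℚ)) * B (k+(s-k))) =
      (if s = 0 then 1 else 0) * B s := by
    intro s _
    have : ∀ k ∈ Finset.range (s+1), (-1:ℚ)^k * ((2*m+k).choose k : ℚ) *
        ((((2*m+1).choose (s-k) : ℚ)) * B (k+(s-k))) =
        ((-1:ℚ)^k * ((2*m+k).choose k : ℚ) * (((2*m+1).choose (s-k) : ℚ))) * B s := by
      intro k hk
      rw [Finset.mem_range] at hk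
      rw [show k + (s-k) = s by omega]
      ring
    rw [Finset.sum_congr rfl this, ← Finset.sum_mul, orth (2*m) s]
  rw [Finset.sum_congr rfl hinner,
    Finset.sum_eq_single 0 (fun b _ hb => by rw [if_neg hb, zero_mul])
      (fun h => absurd (Finset.mem_range.2 (by omega)) h), if_pos rfl, one_mul]
  simp only [hB, pow_zero]
  rw [PowerSeries.coeff_one]

/-- For all `n ≥ 0`: `n! = ∑_{i=0}^{n} V_i · [x^{n-i}] c(x)^{2i+1}`. -/
theorem factorial_eq_sum_V_mul_coeff (n : ℕ) :
    (n.factorial : ℚ) =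
      ∑ i ∈ Finset.range (n + 1),
        Vm i * PowerSeries.coeff (R := ℚ) (n - i) (catGF ^ (2 * i + 1)) := by
  symm
  have step1 : ∀ i ∈ Finset.range (n+1), Vm i * PowerSeries.coeff (R := ℚ) (n-i) (catGF^(2*i+1)) =
      ∑ k ∈ Finset.range (i+1), (-1:ℚ)^k * ((2*i-k).choose k:ℚ) * ((i-k).factorial:ℚ) *
        PowerSeries.coeff (R := ℚ) (n-i) (catGF^(2*i+1)) := fun i _ => by
    rw [Vm, Finset.sum_mul]
  rw [Finset.sum_congr rfl step1]
  have step2 : ∀ i ∈ Finset.range (n+1),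
      ∑ k ∈ Finset.range (i+1), (-1:ℚ)^k * ((2*i-k).choose k:ℚ) * ((i-k).factorial:ℚ) *
        PowerSeries.coeff (R := ℚ) (n-i) (catGF^(2*i+1)) =
      ∑ k ∈ Finset.range (i+1), (-1:ℚ)^(i-k) * ((2*i-(i-k)).choose (i-k):ℚ) *
        ((i-(i-k)).factorial:ℚ) * PowerSeries.coeff (R := ℚ) (n-i) (catGF^(2*i+1)) := by
    intro i _
    rw [← Finset.sum_range_reflect (fun k => (-1:ℚ)^k * ((2*i-k).choose k:ℚ) *
      ((i-k).factorial:ℚ) * PowerSeries.coeff (R := ℚ) (n-i) (catGF^(2*i+1))) (i+1)]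
    refine Finset.sum_congr rfl fun k hk => ?_
    rw [Finset.mem_range] at hk
    rw [show i+1-1-k = i-k by omega]
  rw [Finset.sum_congr rfl step2]
  have step3 : ∀ i ∈ Finset.range (n+1),
      ∑ k ∈ Finset.range (i+1), (-1:ℚ)^(i-k) * ((2*i-(i-k)).choose (i-k):ℚ) *
        ((i-(i-k)).factorial:ℚ) * PowerSeries.coeff (R := ℚ) (n-i) (catGF^(2*i+1)) =
      ∑ k ∈ Finset.range (i+1), (fun m l => (-1:ℚ)^l * ((2*(m+l)-l).choose l:ℚ) *
        (((m+l)-l).factorial:ℚ) * PowerSeries.coeff (R := ℚ) (n-(m+l)) (catGF^(2*(m+l)+1)))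
          k (i-k) := by
    intro i _
    refine Finset.sum_congr rfl fun k hk => ?_
    rw [Finset.mem_range] at hk
    simp only []
    rw [show k + (i-k) = i by omega]
  rw [Finset.sum_congr rfl step3, ← tri (fun m l => (-1:ℚ)^l * ((2*(m+l)-l).choose l:ℚ) *
    (((m+l)-l).factorial:ℚ) * PowerSeries.coeff (R := ℚ) (n-(m+l)) (catGF^(2*(m+l)+1))) n]
  have step4 : ∀ m ∈ Finset.range (n+1),
      ∑ l ∈ Finset.range (n+1-m), (-1:ℚ)^l * ((2*(m+l)-l).choose l:ℚ) *
        (((m+l)-l).factorial:ℚ) * PowerSeries.coeff (R := ℚ) (n-(m+l)) (catGF^(2*(m+l)+1)) =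
      (m.factorial : ℚ) * (if n - m = 0 then 1 else 0) := by
    intro m hm
    rw [Finset.mem_range] at hm
    rw [← keyE m (n-m), show n+1-m = (n-m)+1 by omega, Finset.mul_sum]
    refine Finset.sum_congr rfl fun l hl => ?_
    rw [Finset.mem_range] at hl
    rw [show 2*(m+l)-l = 2*m+l by omega, show (m+l)-l = m by omega,
      show n-(m+l) = (n-m)-l by omega, show 2*(m+l)+1 = 2*m+2*l+1 by omega]
    ring
  rw [Finset.sum_congr rfl step4,
    Finset.sum_eq_single n (fun b hb hbn => by
      rw [Finset.mem_range] at hb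
      rw [if_neg (by omega), mul_zero])
      (fun h => absurd (Finset.mem_range.2 (by omega)) h)]
  rw [Nat.sub_self, if_pos rfl, mul_one]
end
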